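/- For a Poisson random variable Z with parameter λ, the centered moments satisfy E[(Z − λ)^n] = Σ_{a=0}^{n} λ^a S_2(n,a), where S_2(n,a) is the number of partitions of a set of size n into a subsets each of size at least 2. -/

import Mathlib

/-- `S2 n a` is the number of partitions of an `n`-element set into `a` blocks,
each block of cardinality at least 2 (associated Stirling numbers of the second kind). -/
noncomputable def S2 (n a : ℕ) : ℕ :=
  Set.ncard {P : Finset (Finset (Fin n)) |
    P.card = a ∧ (∀ B ∈ P, 2 ≤ B.card) ∧ ∀ x : Fin n, ∃! B, B ∈ P ∧ x ∈ B}


open Finset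

noncomputable def Mm (lam : ℝ) (i : ℕ) : ℝ :=
  ∑' k : ℕ, (Real.exp (-lam) * lam ^ k / (Nat.factorial k : ℝ)) * ((k : ℝ) - lam) ^ i

lemma summable_base (lam : ℝ) : ∀ i : ℕ,
    Summable (fun k : ℕ => lam ^ k / (Nat.factorial k : ℝ) * (k : ℝ) ^ i) := by
  intro i
  induction i using Nat.strong_induction_on with
  | _ i ih =>
    match i with
    | 0 => simpa using Real.summable_pow_div_factorial lam
    | (i+1) =>
      rw [← summable_nat_add_iff 1]
      have h : ∀ k : ℕ, lam ^ (k+1) / (Nat.factorial (k+1) : ℝ) * ((k+1 : ℕ) : ℝ) ^ (i+1)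
          = ∑ j ∈ range (i+1), (lam * ((i.choose j : ℝ))) *
              (lam ^ k / (Nat.factorial k : ℝ) * (k : ℝ) ^ j) := by
        intro k
        have h2 : ((k:ℝ) + 1) ^ i = ∑ j ∈ range (i+1), (k:ℝ) ^ j * 1 ^ (i - j) * (i.choose j : ℝ) :=
          add_pow (k : ℝ) 1 i
        have hfac : (Nat.factorial (k+1) : ℝ) = (k+1 : ℝ) * (Nat.factorial k : ℝ) := by
          push_cast [Nat.factorial_succ]; ring
        have hne : (Nat.factorial k : ℝ) ≠ 0 := Nat.cast_ne_zero.2 (Nat.factorial_ne_zero k)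
        push_cast
        have key : lam ^ (k+1) / (((k:ℝ)+1) * (Nat.factorial k : ℝ)) * (((k:ℝ)+1)^(i+1))
            = lam * (lam ^ k / (Nat.factorial k : ℝ)) * ((k:ℝ)+1) ^ i := by
          rw [pow_succ _ i]; field_simp; ring
        rw [hfac, key, h2, mul_sum]
        exact sum_congr rfl fun j hj => by simp; ring
      simp only [h]
      exact summable_sum fun j hj =>
        (ih j (mem_range.mp hj)).mul_left _

lemma summable_f (lam : ℝ) (i : ℕ) :
    Summable (fun k : ℕ => (Real.exp (-lam) * lam ^ k / (Nat.factorial k : ℝ)) * ((k : ℝ) - lam) ^ i) := by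
  have h : ∀ k : ℕ, (Real.exp (-lam) * lam ^ k / (Nat.factorial k : ℝ)) * ((k : ℝ) - lam) ^ i
      = ∑ j ∈ range (i+1), (Real.exp (-lam) * (-lam) ^ (i - j) * (i.choose j : ℝ)) *
          (lam ^ k / (Nat.factorial k : ℝ) * (k : ℝ) ^ j) := by
    intro k
    have h2 : ((k:ℝ) + (-lam)) ^ i
        = ∑ j ∈ range (i+1), (k:ℝ) ^ j * (-lam) ^ (i - j) * (i.choose j : ℝ) :=
      add_pow (k : ℝ) (-lam) i
    rw [show ((k:ℝ) - lam) = (k:ℝ) + (-lam) from by ring, h2, mul_sum]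
    exact sum_congr rfl fun j hj => by ring
  simp only [h]
  exact summable_sum fun j _ => (summable_base lam j).mul_left _

lemma Mm_zero (lam : ℝ) : Mm lam 0 = 1 := by
  unfold Mm
  simp only [pow_zero, mul_one]
  have h : ∀ k : ℕ, Real.exp (-lam) * lam ^ k / (Nat.factorial k : ℝ)
      = Real.exp (-lam) * (lam ^ k / (Nat.factorial k : ℝ)) := fun k => by ring
  simp only [h]
  rw [tsum_mul_left]
  have : (∑' k : ℕ, lam ^ k / (Nat.factorial k : ℝ)) = Real.exp lam := by
    rw [Real.exp_eq_exp_ℝ, NormedSpace.exp_eq_tsum_div]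
  rw [this, ← Real.exp_add]
  simp

lemma Mm_rec (lam : ℝ) (n : ℕ) :
    Mm lam (n+1) = lam * ∑ j ∈ range n, (n.choose j : ℝ) * Mm lam j := by
  set p : ℕ → ℝ := fun k => Real.exp (-lam) * lam ^ k / (Nat.factorial k : ℝ) with hp
  set g : ℕ → ℝ := fun k => p k * (k : ℝ) * ((k : ℝ) - lam) ^ n with hg
  have hgsplit : ∀ k, g k = p k * ((k:ℝ) - lam) ^ (n+1) + lam * (p k * ((k:ℝ) - lam) ^ n) := by
    intro k; simp only [hg]; ring
  have hsg : Summable g := by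
    exact ((summable_f lam (n+1)).add ((summable_f lam n).mul_left lam)).congr fun k => (hgsplit k).symm
  -- first evaluation: ∑' g = Mm (n+1) + lam * Mm n
  have h1 : ∑' k, g k = Mm lam (n+1) + lam * Mm lam n := by
    simp only [hgsplit]
    rw [Summable.tsum_add (summable_f lam (n+1)) ((summable_f lam n).mul_left lam),
      tsum_mul_left]
    rfl
  -- second evaluation via shift
  have hshift : ∀ k : ℕ, g (k+1) = ∑ i ∈ range (n+1),
      (lam * (n.choose i : ℝ)) * (p k * ((k:ℝ) - lam) ^ i) := by
    intro k
    have hfac : (Nat.factorial (k+1) : ℝ) = ((k:ℝ)+1) * (Nat.factorial k : ℝ) := by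
      push_cast [Nat.factorial_succ]; ring
    have hne : (Nat.factorial k : ℝ) ≠ 0 := Nat.cast_ne_zero.2 (Nat.factorial_ne_zero k)
    have h2 : (((k:ℝ) - lam) + 1) ^ n
        = ∑ i ∈ range (n+1), ((k:ℝ) - lam) ^ i * 1 ^ (n - i) * (n.choose i : ℝ) :=
      add_pow ((k:ℝ) - lam) 1 n
    have hkey : g (k+1) = lam * p k * (((k:ℝ) - lam) + 1) ^ n := by
      simp only [hg, hp]
      push_cast
      rw [hfac, show ((k:ℝ) + 1 - lam) = (((k:ℝ) - lam) + 1) from by ring]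
      field_simp
      ring
    rw [hkey, h2, mul_sum]
    exact sum_congr rfl fun i hi => by rw [one_pow]; ring
  have h2 : ∑' k, g k = ∑ i ∈ range (n+1), (lam * (n.choose i : ℝ)) * Mm lam i := by
    rw [Summable.tsum_eq_zero_add hsg]
    have hg0 : g 0 = 0 := by simp [hg]
    rw [hg0, zero_add]
    simp only [hshift]
    rw [Summable.tsum_finsetSum (fun i _ => (summable_f lam i).mul_left _)]
    exact sum_congr rfl fun i _ => by rw [tsum_mul_left]; rfl
  have := h1.symm.trans h2
  rw [sum_range_succ] at this
  simp only [Nat.choose_self, Nat.cast_one, mul_one] at this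
  have : Mm lam (n+1) = ∑ i ∈ range n, lam * (n.choose i : ℝ) * Mm lam i := by linarith
  rw [this, mul_sum]
  exact sum_congr rfl fun i _ => by ring

set_option linter.unusedSectionVars false


open Finset
open scoped Classical

noncomputable section

variable {α : Type*} [Fintype α] [DecidableEq α]

def IsPart (s : Finset α) (P : Finset (Finset α)) : Prop :=
  (∀ B ∈ P, 2 ≤ B.card ∧ B ⊆ s) ∧ ∀ x ∈ s, ∃! B, B ∈ P ∧ x ∈ B

def partFinset (s : Finset α) : Finset (Finset (Finset α)) :=
  Finset.univ.filter (IsPart s)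

def W (lam : ℝ) (s : Finset α) : ℝ := ∑ P ∈ partFinset s, lam ^ P.card

lemma mem_partFinset {s : Finset α} {P : Finset (Finset α)} :
    P ∈ partFinset s ↔ IsPart s P := by simp [partFinset]

lemma IsPart.block_eq {s : Finset α} {P : Finset (Finset α)} (hP : IsPart s P)
    {B B' : Finset α} (hB : B ∈ P) (hB' : B' ∈ P) {y : α} (hy : y ∈ B) (hy' : y ∈ B') :
    B = B' := by
  have hys : y ∈ s := (hP.1 B hB).2 hy
  obtain ⟨C, -, hun⟩ := hP.2 y hys
  rw [hun B ⟨hB, hy⟩, hun B' ⟨hB', hy'⟩]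

lemma partFinset_empty : partFinset (∅ : Finset α) = {∅} := by
  ext P
  simp only [mem_partFinset, mem_singleton]
  constructor
  · rintro ⟨h1, -⟩
    refine eq_empty_iff_forall_notMem.2 fun B hB => ?_
    obtain ⟨h2, h3⟩ := h1 B hB
    have : B = ∅ := subset_empty.mp h3
    simp [this] at h2
  · rintro rfl
    exact ⟨fun B hB => absurd hB (notMem_empty _), fun x hx => absurd hx (notMem_empty _)⟩

lemma IsPart.card_le {s : Finset α} {P : Finset (Finset α)} (hP : IsPart s P) :
    P.card ≤ s.card := by
  have hdisj : ∀ B ∈ P, ∀ B' ∈ P, B ≠ B' → Disjoint B B' := by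
    intro B hB B' hB' hne
    refine disjoint_left.2 fun y hy hy' => hne (hP.block_eq hB hB' hy hy')
  have hsub : P.biUnion id ⊆ s := by
    intro y hy
    obtain ⟨B, hB, hyB⟩ := mem_biUnion.mp hy
    exact (hP.1 B hB).2 hyB
  calc P.card = ∑ _B ∈ P, 1 := by simp
    _ ≤ ∑ B ∈ P, B.card := sum_le_sum fun B hB => le_trans (by norm_num) (hP.1 B hB).1
    _ = (P.biUnion id).card := (card_biUnion hdisj).symm
    _ ≤ s.card := card_le_card hsub

lemma IsPart.insert_block {s : Finset α} {x : α} (hx : x ∉ s) {S : Finset α} (hS : S ⊆ s)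
    (hSne : S.Nonempty) {Q : Finset (Finset α)} (hQ : IsPart (s \ S) Q) :
    IsPart (insert x s) (insert (insert x S) Q) := by
  have hxS : x ∉ S := fun h => hx (hS h)
  have hxQ : ∀ B ∈ Q, x ∉ B := fun B hB hxB => by
    have := (hQ.1 B hB).2 hxB
    exact hx (mem_sdiff.mp this).1
  constructor
  · intro B hB
    rcases mem_insert.mp hB with rfl | hBQ
    · constructor
      · rw [card_insert_of_notMem hxS]
        have := card_pos.mpr hSne
        omega
      · intro y hy
        rcases mem_insert.mp hy with rfl | hyS
        · exact mem_insert_self _ _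
        · exact mem_insert_of_mem (hS hyS)
    · exact ⟨(hQ.1 B hBQ).1, ((hQ.1 B hBQ).2).trans ((sdiff_subset).trans (subset_insert _ _))⟩
  · intro z hz
    rcases mem_insert.mp hz with hzx | hzs
    · rw [hzx]
      refine ⟨insert x S, ⟨mem_insert_self _ _, mem_insert_self _ _⟩, ?_⟩
      rintro B ⟨hB, hzB⟩
      rcases mem_insert.mp hB with rfl | hBQ
      · rfl
      · exact absurd hzB (hxQ B hBQ)
    · by_cases hzS : z ∈ S
      · refine ⟨insert x S, ⟨mem_insert_self _ _, mem_insert_of_mem hzS⟩, ?_⟩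
        rintro B ⟨hB, hzB⟩
        rcases mem_insert.mp hB with rfl | hBQ
        · rfl
        · have := (hQ.1 B hBQ).2 hzB
          exact absurd hzS (mem_sdiff.mp this).2
      · obtain ⟨B1, ⟨hB1Q, hzB1⟩, hun⟩ := hQ.2 z (mem_sdiff.mpr ⟨hzs, hzS⟩)
        refine ⟨B1, ⟨mem_insert_of_mem hB1Q, hzB1⟩, ?_⟩
        rintro B ⟨hB, hzB⟩
        rcases mem_insert.mp hB with rfl | hBQ
        · rcases mem_insert.mp hzB with rfl | h
          · exact absurd hzs hx
          · exact absurd h hzS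
        · exact hun B ⟨hBQ, hzB⟩

lemma IsPart.erase_block {s : Finset α} {x : α} (hx : x ∉ s) {P : Finset (Finset α)}
    (hP : IsPart (insert x s) P) {B0 : Finset α} (hB0 : B0 ∈ P) (hxB0 : x ∈ B0) :
    (B0.erase x ⊆ s ∧ (B0.erase x).Nonempty) ∧ IsPart (s \ B0.erase x) (P.erase B0) := by
  have hB0sub : B0 ⊆ insert x s := (hP.1 B0 hB0).2
  have herase_sub : B0.erase x ⊆ s := by
    intro y hy
    have hyx := Finset.ne_of_mem_erase hy
    rcases mem_insert.mp (hB0sub (Finset.mem_of_mem_erase hy)) with rfl | h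
    · exact absurd rfl hyx
    · exact h
  refine ⟨⟨herase_sub, ?_⟩, ?_, ?_⟩
  · rw [← card_pos, card_erase_of_mem hxB0]
    have := (hP.1 B0 hB0).1
    omega
  · intro B hB
    have hBP := Finset.mem_of_mem_erase hB
    have hBne := Finset.ne_of_mem_erase hB
    refine ⟨(hP.1 B hBP).1, ?_⟩
    intro y hy
    have hyins : y ∈ insert x s := (hP.1 B hBP).2 hy
    have hyx : y ≠ x := by
      rintro rfl
      exact hBne (hP.block_eq hBP hB0 hy hxB0)
    have hys : y ∈ s := by rcases mem_insert.mp hyins with rfl | h; exact absurd rfl hyx; exact h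
    refine mem_sdiff.mpr ⟨hys, fun hyB0 => ?_⟩
    exact hBne (hP.block_eq hBP hB0 hy (Finset.mem_of_mem_erase hyB0))
  · intro z hz
    obtain ⟨hzs, hzB0e⟩ := mem_sdiff.mp hz
    have hzx : z ≠ x := fun h => hx (h ▸ hzs)
    have hzB0 : z ∉ B0 := fun h => hzB0e (Finset.mem_erase.mpr ⟨hzx, h⟩)
    obtain ⟨B1, ⟨hB1P, hzB1⟩, hun⟩ := hP.2 z (mem_insert_of_mem hzs)
    have hB1ne : B1 ≠ B0 := fun h => hzB0 (h ▸ hzB1)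
    refine ⟨B1, ⟨Finset.mem_erase.mpr ⟨hB1ne, hB1P⟩, hzB1⟩, ?_⟩
    rintro B ⟨hB, hzB⟩
    exact hun B ⟨Finset.mem_of_mem_erase hB, hzB⟩

lemma W_insert (lam : ℝ) {s : Finset α} {x : α} (hx : x ∉ s) :
    W lam (insert x s) = lam * ((∑ S ∈ s.powerset, W lam (s \ S)) - W lam s) := by
  have key : ∑ P ∈ partFinset (insert x s), lam ^ P.card
      = ∑ q ∈ (s.powerset.filter Finset.Nonempty).sigma
          (fun S => partFinset (s \ S)), lam ^ (q.2.card + 1) := by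
    refine Finset.sum_bij'
      (fun P hP => (⟨(P.choose (x ∈ ·) ((mem_partFinset.mp hP).2 x (mem_insert_self x s))).erase x,
        P.erase (P.choose (x ∈ ·) ((mem_partFinset.mp hP).2 x (mem_insert_self x s)))⟩ :
        Σ _ : Finset α, Finset (Finset α)))
      (fun q _ => insert (insert x q.1) q.2) ?_ ?_ ?_ ?_ ?_
    · -- maps into sigma
      intro P hP
      have hPart := mem_partFinset.mp hP
      set B0 := P.choose (x ∈ ·) (hPart.2 x (mem_insert_self x s)) with hB0def
      have hB0P : B0 ∈ P := (P.choose_spec (x ∈ ·) _).1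
      have hxB0 : x ∈ B0 := (P.choose_spec (x ∈ ·) _).2
      obtain ⟨⟨hsub, hne⟩, hpart⟩ := hPart.erase_block hx hB0P hxB0
      exact Finset.mem_sigma.mpr ⟨mem_filter.mpr ⟨mem_powerset.mpr hsub, hne⟩,
        mem_partFinset.mpr hpart⟩
    · -- maps back
      rintro ⟨S, Q⟩ hq
      obtain ⟨hS, hQ⟩ := Finset.mem_sigma.mp hq
      obtain ⟨hSsub, hSne⟩ := mem_filter.mp hS
      exact mem_partFinset.mpr
        ((mem_partFinset.mp hQ).insert_block hx (mem_powerset.mp hSsub) hSne)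
    · -- left inverse
      intro P hP
      have hPart := mem_partFinset.mp hP
      set B0 := P.choose (x ∈ ·) (hPart.2 x (mem_insert_self x s)) with hB0def
      have hB0P : B0 ∈ P := (P.choose_spec (x ∈ ·) _).1
      have hxB0 : x ∈ B0 := (P.choose_spec (x ∈ ·) _).2
      simp only
      rw [Finset.insert_erase hxB0, Finset.insert_erase hB0P]
    · -- right inverse
      rintro ⟨S, Q⟩ hq
      obtain ⟨hS, hQ⟩ := Finset.mem_sigma.mp hq
      obtain ⟨hSsub, hSne⟩ := mem_filter.mp hS
      have hSs : S ⊆ s := mem_powerset.mp hSsub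
      have hxS : x ∉ S := fun h => hx (hSs h)
      have hQpart := mem_partFinset.mp hQ
      have hxQ : insert x S ∉ Q := fun h => by
        have := (hQpart.1 _ h).2 (mem_insert_self x S)
        exact hx (mem_sdiff.mp this).1
      have hJ : IsPart (insert x s) (insert (insert x S) Q) :=
        hQpart.insert_block hx hSs hSne
      have huniq : ∀ B, B ∈ insert (insert x S) Q → x ∈ B → B = insert x S := fun B hB hxB =>
        hJ.block_eq hB (mem_insert_self _ _) hxB (mem_insert_self x S)
      simp only
      rw [huniq _ (Finset.choose_mem (fun B => x ∈ B) _ _) (Finset.choose_property (fun B => x ∈ B) _ _),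
        Finset.erase_insert hxS, Finset.erase_insert hxQ]
    · -- weights
      intro P hP
      have hPart := mem_partFinset.mp hP
      have hB0P : P.choose (x ∈ ·) (hPart.2 x (mem_insert_self x s)) ∈ P :=
        (P.choose_spec (x ∈ ·) _).1
      simp only
      rw [Finset.card_erase_add_one hB0P]
  unfold W
  rw [key, Finset.sum_sigma]
  have step : ∀ S ∈ s.powerset.filter Finset.Nonempty,
      (∑ Q ∈ partFinset (s \ S), lam ^ (Q.card + 1)) = lam * ∑ Q ∈ partFinset (s \ S), lam ^ Q.card := by
    intro S _
    rw [mul_sum]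
    exact sum_congr rfl fun Q _ => by rw [pow_succ]; ring
  rw [sum_congr rfl step]
  have hsplit := Finset.sum_filter_add_sum_filter_not s.powerset Finset.Nonempty
    (fun S => lam * ∑ Q ∈ partFinset (s \ S), lam ^ Q.card)
  have hnotne : s.powerset.filter (fun S => ¬ S.Nonempty) = {∅} := by
    ext S
    simp [Finset.not_nonempty_iff_eq_empty]
    rintro rfl
    exact empty_subset s
  rw [hnotne] at hsplit
  simp only [Finset.sum_singleton, sdiff_empty] at hsplit
  have : ∑ S ∈ s.powerset.filter Finset.Nonempty,
      (lam * ∑ Q ∈ partFinset (s \ S), lam ^ Q.card)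
      = (∑ S ∈ s.powerset, lam * ∑ Q ∈ partFinset (s \ S), lam ^ Q.card)
        - lam * ∑ Q ∈ partFinset s, lam ^ Q.card := by linarith
  rw [this, mul_sub, mul_sum, mul_sum]

lemma W_eq (lam : ℝ) (M : ℕ → ℝ) (hM0 : M 0 = 1)
    (hrec : ∀ m, M (m+1) = lam * ∑ j ∈ range m, (m.choose j : ℝ) * M j) :
    ∀ s : Finset α, W lam s = M s.card := by
  intro s
  induction s using Finset.strongInduction with
  | _ s ih =>
    rcases s.eq_empty_or_nonempty with rfl | hne
    · simp [W, partFinset_empty, hM0]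
    · obtain ⟨x, hxs⟩ := hne
      have hxt : x ∉ s.erase x := notMem_erase x s
      have hins : insert x (s.erase x) = s := insert_erase hxs
      set t := s.erase x with ht
      set m := t.card with hm
      have hIH : ∀ S ∈ t.powerset, W lam (t \ S) = M ((t \ S).card) := fun S hS =>
        ih _ (Finset.ssubset_of_subset_of_ssubset (sdiff_subset) (erase_ssubset hxs))
      have hIHt : W lam t = M m := ih t (erase_ssubset hxs)
      rw [← hins, W_insert lam hxt, sum_congr rfl hIH, hIHt,
        card_insert_of_notMem hxt]
      have h1 : ∀ S ∈ t.powerset, M ((t \ S).card) = M (m - S.card) := fun S hS => by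
        rw [card_sdiff_of_subset (mem_powerset.mp hS)]
      rw [sum_congr rfl h1, Finset.sum_powerset]
      have h2 : ∀ j ∈ range (m + 1),
          (∑ S ∈ Finset.powersetCard j t, M (m - S.card)) = (m.choose j : ℝ) * M (m - j) := by
        intro j hj
        have : ∀ S ∈ Finset.powersetCard j t, M (m - S.card) = M (m - j) := fun S hS => by
          rw [(Finset.mem_powersetCard.mp hS).2]
        rw [sum_congr rfl this, sum_const, Finset.card_powersetCard, nsmul_eq_mul]
      rw [sum_congr rfl h2]
      have h3 : ∑ j ∈ range (m + 1), (m.choose j : ℝ) * M (m - j)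
          = ∑ j ∈ range (m + 1), (m.choose j : ℝ) * M j := by
        rw [← Finset.sum_range_reflect]
        refine sum_congr rfl fun j hj => ?_
        have hj' : j ≤ m := by
          have := mem_range.mp hj; omega
        rw [show m + 1 - 1 - j = m - j from rfl, Nat.choose_symm hj', Nat.sub_sub_self hj']
      rw [h3, sum_range_succ, Nat.choose_self, Nat.cast_one, one_mul, hrec m]
      ring

lemma S2_eq_card (n a : ℕ) :
    S2 n a = ((partFinset (univ : Finset (Fin n))).filter (fun P => P.card = a)).card := by
  unfold S2
  rw [← Set.ncard_coe_finset]
  congr 1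
  ext P
  simp only [Finset.coe_filter, Set.mem_setOf_eq, mem_partFinset]
  constructor
  · rintro ⟨hcard, hblocks, hcover⟩
    exact ⟨⟨fun B hB => ⟨hblocks B hB, subset_univ B⟩, fun x _ => hcover x⟩, hcard⟩
  · rintro ⟨⟨h1, h2⟩, hcard⟩
    exact ⟨hcard, fun B hB => (h1 B hB).1, fun x => h2 x (mem_univ x)⟩

end

/-- For a Poisson random variable `Z` with parameter `lam`, the centered moments satisfy
`E[(Z - lam)^n] = ∑_{a=0}^{n} lam^a * S2 n a`. -/
theorem poisson_centered_moment_eq_sum_S2 (lam : ℝ) (hlam : 0 < lam) (n : ℕ) :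
    (∑' k : ℕ, (Real.exp (-lam) * lam ^ k / (Nat.factorial k : ℝ)) * ((k : ℝ) - lam) ^ n)
      = ∑ a ∈ Finset.range (n + 1), lam ^ a * (S2 n a : ℝ) := by
  classical
  have hW : W lam (Finset.univ : Finset (Fin n)) = Mm lam n := by
    have := W_eq lam (Mm lam) (Mm_zero lam) (Mm_rec lam) (Finset.univ : Finset (Fin n))
    rwa [Finset.card_univ, Fintype.card_fin] at this
  have hL : (∑' k : ℕ, (Real.exp (-lam) * lam ^ k / (Nat.factorial k : ℝ)) * ((k : ℝ) - lam) ^ n)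
      = Mm lam n := rfl
  rw [hL, ← hW]
  unfold W
  have hmaps : ∀ P ∈ partFinset (Finset.univ : Finset (Fin n)),
      P.card ∈ Finset.range (n+1) := by
    intro P hP
    have := (mem_partFinset.mp hP).card_le
    rw [Finset.card_univ, Fintype.card_fin] at this
    exact Finset.mem_range.mpr (Nat.lt_succ_of_le this)
  rw [← Finset.sum_fiberwise_of_maps_to hmaps (fun P => lam ^ P.card)]
  refine Finset.sum_congr rfl fun a ha => ?_
  have hconst : ∀ P ∈ (partFinset (Finset.univ : Finset (Fin n))).filter
      (fun P => P.card = a), lam ^ P.card = lam ^ a := fun P hP => by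
    rw [(Finset.mem_filter.mp hP).2]
  rw [Finset.sum_congr rfl hconst, Finset.sum_const, nsmul_eq_mul, S2_eq_card, mul_comm]
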